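/- Datalog programs terminate: call a rule flat if every argument of its head clause and of each of its body clauses is a variable or a literal. If every rule of a DLS program P is flat (i.e., P lies in the Datalog subset of DLS), then the least fixed point of IC_P is a finite database, and the iteration db₀ = ∅, db_{n+1} = IC_P(db_n) reaches this least fixed point after finitely many steps (there exists k with db_k = db_{k+1} = lfp IC_P). -/
import Mathlib


namespace DLS

/-! Datalog with first-class facts (DLS): basic syntax and semantics. -/

variable {Rel Lit Var : Type}

/-- A value is either a literal or a fact `R(v₁,…,vₙ)`. -/
inductive Val (Rel Lit : Type) : Type where
  | lit : Lit → Val Rel Lit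
  | fact : Rel → List (Val Rel Lit) → Val Rel Lit

/-- A fact is a relation symbol applied to a finite list of values. -/
abbrev Fact (Rel Lit : Type) : Type := Rel × List (Val Rel Lit)

/-- A database is a set of facts. -/
abbrev Database (Rel Lit : Type) : Type := Set (Fact Rel Lit)

def Fact.toVal (f : Fact Rel Lit) : Val Rel Lit := Val.fact f.1 f.2

mutual
/-- All subfacts of a value: `subfact(R(v₁,…,vₙ)) = {R(v₁,…,vₙ)} ∪ ⋃ᵢ subfact(vᵢ)`,
    and `subfact(v) = ∅` for a literal `v`. -/
def Val.subfacts : Val Rel Lit → Set (Fact Rel Lit)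
  | .lit _ => ∅
  | .fact R args => insert (R, args) (Val.subfactsList args)
def Val.subfactsList : List (Val Rel Lit) → Set (Fact Rel Lit)
  | [] => ∅
  | v :: vs => v.subfacts ∪ Val.subfactsList vs
end

/-- The `subfact` function on facts. -/
def Fact.subfact (f : Fact Rel Lit) : Set (Fact Rel Lit) :=
  Val.subfacts (Val.fact f.1 f.2)

/-- A database is subfact-closed if `db = ⋃ {subfact(f) | f ∈ db}`. -/
def SubfactClosed (db : Database Rel Lit) : Prop :=
  db = ⋃ f ∈ db, Fact.subfact f

/-- An argument of a clause: a variable, a literal, or a (sub)clause. -/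
inductive Arg (Rel Lit Var : Type) : Type where
  | var : Var → Arg Rel Lit Var
  | lit : Lit → Arg Rel Lit Var
  | clause : Rel → List (Arg Rel Lit Var) → Arg Rel Lit Var

/-- A clause is a relation symbol applied to a finite list of arguments. -/
abbrev Clause (Rel Lit Var : Type) : Type := Rel × List (Arg Rel Lit Var)

/-- A substitution maps variables to values. -/
abbrev Subst (Rel Lit Var : Type) : Type := Var → Val Rel Lit

mutual
/-- Applying a substitution to an argument yields a value. -/
def Arg.subst (θ : Subst Rel Lit Var) : Arg Rel Lit Var → Val Rel Lit
  | .var x => θ x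
  | .lit l => .lit l
  | .clause R args => .fact R (Arg.substList θ args)
def Arg.substList (θ : Subst Rel Lit Var) : List (Arg Rel Lit Var) → List (Val Rel Lit)
  | [] => []
  | a :: as => Arg.subst θ a :: Arg.substList θ as
end

/-- `c[θ]`: the fact obtained by substituting each variable of clause `c` by its image. -/
def Clause.subst (θ : Subst Rel Lit Var) (c : Clause Rel Lit Var) : Fact Rel Lit :=
  (c.1, Arg.substList θ c.2)

mutual
/-- The variables occurring in an argument. -/
def Arg.vars : Arg Rel Lit Var → Set Var
  | .var x => {x}
  | .lit _ => ∅
  | .clause _ args => Arg.varsList args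
def Arg.varsList : List (Arg Rel Lit Var) → Set Var
  | [] => ∅
  | a :: as => a.vars ∪ Arg.varsList as
end

/-- The variables occurring in a clause. -/
def Clause.vars (c : Clause Rel Lit Var) : Set Var := Arg.varsList c.2

mutual
/-- The literals occurring in an argument. -/
def Arg.lits : Arg Rel Lit Var → Set Lit
  | .var _ => ∅
  | .lit l => {l}
  | .clause _ args => Arg.litsList args
def Arg.litsList : List (Arg Rel Lit Var) → Set Lit
  | [] => ∅
  | a :: as => a.lits ∪ Arg.litsList as
end

/-- The literals occurring in a clause. -/
def Clause.lits (c : Clause Rel Lit Var) : Set Lit := Arg.litsList c.2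

/-- A rule has a head clause and a finite set of body clauses. -/
structure Rule (Rel Lit Var : Type) : Type where
  head : Clause Rel Lit Var
  body : Set (Clause Rel Lit Var)
  body_finite : body.Finite

/-- The literals occurring in a rule. -/
def Rule.lits (R : Rule Rel Lit Var) : Set Lit :=
  R.head.lits ∪ ⋃ c ∈ R.body, c.lits

/-- A rule is well-scoped if every variable of the head occurs in the body. -/
def Rule.WellScoped (R : Rule Rel Lit Var) : Prop :=
  R.head.vars ⊆ ⋃ c ∈ R.body, c.vars

/-- Immediate consequence of a rule:
    `IC_R(db) = db ∪ ⋃ { subfact(Head(R)[θ]) | θ with Body(R)[θ] ⊆ db }`. -/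
def Rule.IC (R : Rule Rel Lit Var) (db : Database Rel Lit) : Database Rel Lit :=
  db ∪ ⋃ (θ : Subst Rel Lit Var) (_ : ∀ c ∈ R.body, Clause.subst θ c ∈ db),
      Fact.subfact (Clause.subst θ R.head)

/-- A DLS program is a finite set of well-scoped rules. -/
structure Program (Rel Lit Var : Type) : Type where
  rules : Set (Rule Rel Lit Var)
  rules_finite : rules.Finite
  wellScoped : ∀ R ∈ rules, R.WellScoped

/-- Immediate consequence of a program: `IC_P(db) = db ∪ ⋃_{R ∈ P} IC_R(db)`. -/
def Program.IC (P : Program Rel Lit Var) (db : Database Rel Lit) : Database Rel Lit :=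
  db ∪ ⋃ R ∈ P.rules, R.IC db

theorem Rule.IC_mono (R : Rule Rel Lit Var) : Monotone R.IC := by
  intro a b hab x hx
  rcases hx with hx | hx
  · exact Or.inl (hab hx)
  · right
    simp only [Set.mem_iUnion] at hx ⊢
    obtain ⟨θ, hθ, hm⟩ := hx
    exact ⟨θ, fun c hc => hab (hθ c hc), hm⟩

theorem Program.IC_mono (P : Program Rel Lit Var) : Monotone P.IC := by
  intro a b hab x hx
  rcases hx with hx | hx
  · exact Or.inl (hab hx)
  · right
    simp only [Set.mem_iUnion] at hx ⊢
    obtain ⟨R, hR, hm⟩ := hx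
    exact ⟨R, hR, R.IC_mono hab hm⟩

/-- The immediate consequence operator `IC_P`, as a monotone map on the complete
    lattice of databases ordered by inclusion. Its least fixed point is
    `OrderHom.lfp P.ICHom`. -/
def Program.ICHom (P : Program Rel Lit Var) : Database Rel Lit →o Database Rel Lit :=
  ⟨P.IC, P.IC_mono⟩

/-- `I ⊨ R`: for every substitution θ, `Body(R)[θ] ⊆ I` implies `Head(R)[θ] ∈ I`. -/
def Models (I : Database Rel Lit) (R : Rule Rel Lit Var) : Prop :=
  ∀ θ : Subst Rel Lit Var, (∀ c ∈ R.body, Clause.subst θ c ∈ I) → Clause.subst θ R.head ∈ I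

/-- A Herbrand model of `P` is a subfact-closed database satisfying every rule of `P`. -/
def HerbrandModel (P : Program Rel Lit Var) (I : Database Rel Lit) : Prop :=
  SubfactClosed I ∧ ∀ R ∈ P.rules, Models I R

/-- An argument is flat if it is a variable or a literal (not a nested clause). -/
def Arg.IsFlat : Arg Rel Lit Var → Prop
  | .clause _ _ => False
  | _ => True

/-- A clause is flat if every argument is a variable or a literal. -/
def Clause.Flat (c : Clause Rel Lit Var) : Prop := ∀ a ∈ c.2, a.IsFlat

/-- A rule is flat if its head clause and all its body clauses are flat. -/
def Rule.Flat (R : Rule Rel Lit Var) : Prop := R.head.Flat ∧ ∀ c ∈ R.body, c.Flat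

/-- A fact is flat if every argument in its argument list is a literal. -/
def Fact.Flat (f : Fact Rel Lit) : Prop := ∀ v ∈ f.2, ∃ l : Lit, v = Val.lit l

/-- `natFact z s n` encodes the natural number `n` as the fact
    `s(s(...(z())...))` with `n` applications of `s`. -/
def natFact (z s : Rel) : ℕ → Fact Rel Lit
  | 0 => (z, [])
  | n + 1 => (s, [(natFact z s n).toVal])


lemma substList_length (θ : Subst Rel Lit Var) (args : List (Arg Rel Lit Var)) :
    (Arg.substList θ args).length = args.length := by
  induction args with
  | nil => rfl
  | cons a as ih => simp [Arg.substList, ih]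

lemma subfactsList_of_lits {vals : List (Val Rel Lit)}
    (h : ∀ v ∈ vals, ∃ l, v = Val.lit l) : Val.subfactsList vals = ∅ := by
  induction vals with
  | nil => rfl
  | cons v vs ih =>
    obtain ⟨l, rfl⟩ := h v (by simp)
    simp [Val.subfactsList, Val.subfacts, ih (fun v hv => h v (by simp [hv]))]

lemma theta_mem_substList {θ : Subst Rel Lit Var} {args : List (Arg Rel Lit Var)}
    (hflat : ∀ a ∈ args, a.IsFlat) {x : Var} (hx : x ∈ Arg.varsList args) :
    θ x ∈ Arg.substList θ args := by
  induction args with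
  | nil => simp [Arg.varsList] at hx
  | cons a as ih =>
    simp only [Arg.varsList, Set.mem_union] at hx
    rcases hx with hx | hx
    · cases a with
      | var y =>
        simp only [Arg.vars, Set.mem_singleton_iff] at hx
        subst hx
        simp [Arg.substList, Arg.subst]
      | lit l => simp [Arg.lits, Arg.vars] at hx
      | clause r as2 => exact absurd (hflat (Arg.clause r as2) (by simp)) (by simp [Arg.IsFlat])
    · have := ih (fun a ha => hflat a (by simp [ha])) hx
      simp [Arg.substList, this]

lemma lits_finite_of_flat {args : List (Arg Rel Lit Var)} (h : ∀ a ∈ args, a.IsFlat) :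
    (Arg.litsList args).Finite := by
  induction args with
  | nil => simp [Arg.litsList]
  | cons a as ih =>
    have ha := h a (by simp)
    have hfa : (Arg.lits a).Finite := by
      cases a with
      | var x => simp [Arg.lits]
      | lit l => simp [Arg.lits]
      | clause r as2 => exact absurd ha (by simp [Arg.IsFlat])
    have := hfa.union (ih fun a ha => h a (by simp [ha]))
    simpa [Arg.litsList] using this

lemma litLists_finite {s : Set Lit} (hs : s.Finite) (n : ℕ) :
    {l : List (Val Rel Lit) | l.length = n ∧ ∀ v ∈ l, ∃ a ∈ s, v = Val.lit a}.Finite := by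
  induction n with
  | zero =>
    apply Set.Finite.subset (Set.finite_singleton ([] : List (Val Rel Lit)))
    rintro l ⟨hl, -⟩
    simp only [List.length_eq_zero_iff] at hl
    simp [hl]
  | succ n ih =>
    apply Set.Finite.subset (Set.Finite.image2 List.cons (hs.image Val.lit) ih)
    rintro l ⟨hl, hmem⟩
    cases l with
    | nil => simp at hl
    | cons v vs =>
      obtain ⟨a, ha, rfl⟩ := hmem v (by simp)
      exact Set.mem_image2_of_mem (Set.mem_image_of_mem _ ha)
        ⟨by simpa using hl, fun w hw => hmem w (by simp [hw])⟩

lemma substList_vals {θ : Subst Rel Lit Var} {s : Set Lit} {args : List (Arg Rel Lit Var)}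
    (hflat : ∀ a ∈ args, a.IsFlat)
    (hv : ∀ x ∈ Arg.varsList args, ∃ a ∈ s, θ x = Val.lit a)
    (hl : Arg.litsList args ⊆ s) :
    ∀ v ∈ Arg.substList θ args, ∃ a ∈ s, v = Val.lit a := by
  induction args with
  | nil => simp [Arg.substList]
  | cons a as ih =>
    intro v hvmem
    simp only [Arg.substList] at hvmem
    rcases List.mem_cons.mp hvmem with rfl | hvmem
    · cases a with
      | var x =>
        simpa [Arg.subst] using hv x (by simp [Arg.varsList, Arg.vars])
      | lit l =>
        exact ⟨l, hl (by simp [Arg.litsList, Arg.lits]), rfl⟩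
      | clause r as2 => exact absurd (hflat (Arg.clause r as2) (by simp)) (by simp [Arg.IsFlat])
    · refine ih (fun a ha => hflat a (by simp [ha])) ?_ ?_ v hvmem
      · intro x hx
        exact hv x (by simp only [Arg.varsList, Set.mem_union]; exact Or.inr hx)
      · intro l hl'
        exact hl (by simp only [Arg.litsList, Set.mem_union]; exact Or.inr hl')

/-- Datalog programs terminate: if every rule of a DLS program
`P` is flat, then the least fixed point of `IC_P` is finite, and the iteration
`db₀ = ∅`, `db_{n+1} = IC_P(db_n)` reaches it after finitely many steps. -/
theorem flat_program_terminates {Rel Lit Var : Type} (P : Program Rel Lit Var)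
    (hflat : ∀ R ∈ P.rules, R.Flat) :
    (OrderHom.lfp P.ICHom : Database Rel Lit).Finite ∧
    ∃ k : ℕ, P.IC^[k] ∅ = P.IC^[k + 1] ∅ ∧
      P.IC^[k] ∅ = OrderHom.lfp P.ICHom := by
  classical
  set L : Set Lit := ⋃ R ∈ P.rules, R.lits with hL
  have hLfin : L.Finite := by
    apply Set.Finite.biUnion P.rules_finite
    intro R hR
    obtain ⟨hhead, hbody⟩ := hflat R hR
    apply Set.Finite.union (lits_finite_of_flat hhead)
    exact Set.Finite.biUnion R.body_finite fun c hc => lits_finite_of_flat (hbody c hc)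
  set U : Database Rel Lit := ⋃ R ∈ P.rules,
    {f : Fact Rel Lit | f.1 = R.head.1 ∧ f.2.length = R.head.2.length ∧
      ∀ v ∈ f.2, ∃ a ∈ L, v = Val.lit a} with hU
  have hUfin : U.Finite := by
    apply Set.Finite.biUnion P.rules_finite
    intro R _
    apply Set.Finite.subset
      ((litLists_finite (Rel := Rel) hLfin R.head.2.length).image fun args => (R.head.1, args))
    rintro ⟨r, args⟩ ⟨h1, h2, h3⟩
    exact ⟨args, ⟨h2, h3⟩, by simp_all⟩
  have hpre : P.IC U ⊆ U := by
    rintro f (hf | hf)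
    · exact hf
    simp only [Set.mem_iUnion] at hf
    obtain ⟨R, hR, hf⟩ := hf
    rcases hf with hf | hf
    · exact hf
    simp only [Set.mem_iUnion] at hf
    obtain ⟨θ, hθ, hf⟩ := hf
    have hvar : ∀ x ∈ Clause.vars R.head, ∃ a ∈ L, θ x = Val.lit a := by
      intro x hx
      have hws := P.wellScoped R hR hx
      simp only [Set.mem_iUnion] at hws
      obtain ⟨c, hc, hxc⟩ := hws
      have hcflat : ∀ a ∈ c.2, a.IsFlat := (hflat R hR).2 c hc
      have hmem : θ x ∈ Arg.substList θ c.2 := theta_mem_substList hcflat hxc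
      have hcU := hθ c hc
      rw [hU] at hcU
      simp only [Set.mem_iUnion, Set.mem_setOf_eq] at hcU
      obtain ⟨R', -, -, -, h3⟩ := hcU
      exact h3 _ hmem
    have hheadlits : Clause.lits R.head ⊆ L := by
      intro l hl
      rw [hL]
      simp only [Set.mem_iUnion]
      exact ⟨R, hR, Set.mem_union_left _ hl⟩
    have hvals : ∀ v ∈ Arg.substList θ R.head.2, ∃ a ∈ L, v = Val.lit a :=
      substList_vals (hflat R hR).1 hvar hheadlits
    have hhf : Clause.subst θ R.head ∈ U := by
      rw [hU]
      simp only [Set.mem_iUnion, Set.mem_setOf_eq]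
      exact ⟨R, hR, rfl, substList_length θ _, hvals⟩
    have hsub : Fact.subfact (Clause.subst θ R.head) = {Clause.subst θ R.head} := by
      show Val.subfacts _ = _
      rw [Val.subfacts, subfactsList_of_lits (fun v hv => by
        obtain ⟨a, -, ha⟩ := hvals v hv; exact ⟨a, ha⟩)]
      simp [Clause.subst]
    rw [hsub] at hf
    rw [Set.mem_singleton_iff] at hf
    rw [hf]
    exact hhf
  have hlfp_le : (OrderHom.lfp P.ICHom : Database Rel Lit) ⊆ U := OrderHom.lfp_le _ hpre
  have hlfpfin := hUfin.subset hlfp_le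
  refine ⟨hlfpfin, ?_⟩
  have hmono_chain : ∀ n, P.IC^[n] ∅ ⊆ P.IC^[n + 1] ∅ := by
    intro n
    rw [Function.iterate_succ_apply']
    intro x hx
    exact Or.inl hx
  have hsub_lfp : ∀ n, P.IC^[n] ∅ ⊆ OrderHom.lfp P.ICHom := by
    intro n
    induction n with
    | zero => simp
    | succ n ih =>
      rw [Function.iterate_succ_apply']
      calc P.IC (P.IC^[n] ∅) ⊆ P.IC (OrderHom.lfp P.ICHom) := P.IC_mono ih
        _ = _ := OrderHom.map_lfp P.ICHom
  have hstab : ∃ k, P.IC^[k] ∅ = P.IC^[k + 1] ∅ := by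
    by_contra h
    push_neg at h
    have hcard : ∀ n, n ≤ (P.IC^[n] ∅).ncard := by
      intro n
      induction n with
      | zero => simp
      | succ n ih =>
        have hss : P.IC^[n] ∅ ⊂ P.IC^[n + 1] ∅ := lt_of_le_of_ne (hmono_chain n) (h n)
        have := Set.ncard_lt_ncard hss (hlfpfin.subset (hsub_lfp (n + 1)))
        omega
    have h1 := hcard ((OrderHom.lfp P.ICHom : Database Rel Lit).ncard + 1)
    have h2 := Set.ncard_le_ncard (hsub_lfp ((OrderHom.lfp P.ICHom : Database Rel Lit).ncard + 1))
      hlfpfin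
    omega
  obtain ⟨k, hk⟩ := hstab
  refine ⟨k, hk, ?_⟩
  apply subset_antisymm (hsub_lfp k)
  apply OrderHom.lfp_le
  show P.IC (P.IC^[k] ∅) ⊆ P.IC^[k] ∅
  rw [show P.IC (P.IC^[k] ∅) = P.IC^[k + 1] ∅ from (Function.iterate_succ_apply' P.IC k ∅).symm,
    ← hk]

end DLS
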